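/- Let G be a finite commutative group and π a pairing on G, and let c ∈ G. Let X = {x ∈ G | x² = 1} and 2G = {g² | g ∈ G}. Then the following are equivalent: (1) for every x ∈ G with x² = 1 one has π x x = π x c; (2) for every y ∈ G, Σ_{x ∈ G, x² = 1} (π x x : ℂ) · (π x y) equals |X| if c·y ∈ 2G and equals 0 otherwise. -/

import Mathlib

/-- Shifted character sum vanishing. -/
lemma stmt6_shift {G : Type*} [CommGroup G] [DecidableEq G] (s : Finset G) (φ : G → ℂˣ)
    (x₀ : G) (hcl : ∀ x ∈ s, x₀ * x ∈ s) (hφ : ∀ x, φ (x₀ * x) = φ x₀ * φ x)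
    (hne : φ x₀ ≠ 1) : (∑ x ∈ s, (φ x : ℂ)) = 0 := by
  set e : G ↪ G := ⟨fun x => x₀ * x, mul_right_injective x₀⟩ with he
  have hmap : s.map e = s := by
    apply Finset.eq_of_subset_of_card_le
    · intro x hx
      rcases Finset.mem_map.mp hx with ⟨y, hy, rfl⟩
      exact hcl y hy
    · rw [Finset.card_map]
  have h1 : (∑ x ∈ s, (φ x : ℂ)) = ∑ x ∈ s, (φ (x₀ * x) : ℂ) := by
    conv_lhs => rw [← hmap, Finset.sum_map]
    exact Finset.sum_congr rfl fun x _ => rfl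
  have h2 : (∑ x ∈ s, (φ (x₀ * x) : ℂ)) = (φ x₀ : ℂ) * ∑ x ∈ s, (φ x : ℂ) := by
    rw [Finset.mul_sum]
    exact Finset.sum_congr rfl fun x _ => by rw [hφ x, Units.val_mul]
  have h3 : ((φ x₀ : ℂ) - 1) * (∑ x ∈ s, (φ x : ℂ)) = 0 := by
    rw [sub_mul, one_mul, ← h2, ← h1, sub_self]
  rcases mul_eq_zero.mp h3 with h | h
  · exact absurd (Units.ext (by linear_combination h : (φ x₀ : ℂ) = 1)) hne
  · exact h

theorem stmt_6 {G : Type*} [CommGroup G] [Fintype G] [DecidableEq G]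
    (π : G → G → ℂˣ)
    (hmul_left : ∀ g h k : G, π (g * h) k = π g k * π h k)
    (hmul_right : ∀ g h k : G, π g (h * k) = π g h * π g k)
    (hsymm : ∀ g h : G, π g h = π h g)
    (hnondeg : ∀ g : G, (∀ h : G, π g h = 1) → g = 1)
    (c : G) :
    (∀ x : G, x ^ 2 = 1 → π x x = π x c) ↔
    (∀ y : G,
      (∑ x ∈ Finset.univ.filter (fun x : G => x ^ 2 = 1), ((π x x : ℂ) * (π x y : ℂ))) =
        if ∃ g : G, g ^ 2 = c * y then
          ((Finset.univ.filter (fun x : G => x ^ 2 = 1)).card : ℂ)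
        else 0) := by
  classical
  set X : Finset G := Finset.univ.filter (fun x : G => x ^ 2 = 1) with hX
  have memX : ∀ x : G, x ∈ X ↔ x ^ 2 = 1 := by
    intro x; simp [hX]
  have h1l : ∀ k : G, π 1 k = 1 := by
    intro k
    have h := hmul_left 1 1 k
    rw [one_mul] at h
    exact left_eq_mul.mp h
  have h1r : ∀ k : G, π k 1 = 1 := fun k => (hsymm k 1).trans (h1l k)
  have hinv : ∀ x y : G, π x y⁻¹ = (π x y)⁻¹ := by
    intro x y
    have h := hmul_right x y y⁻¹
    rw [mul_inv_cancel, h1r] at h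
    exact eq_inv_of_mul_eq_one_right h.symm
  have hsq : ∀ x z : G, x ^ 2 = 1 → (π x z : ℂ) * (π x z : ℂ) = 1 := by
    intro x z hx
    have : π x z * π x z = π (x * x) z := (hmul_left x x z).symm
    rw [← pow_two x, hx, h1l] at this
    calc (π x z : ℂ) * (π x z : ℂ) = ((π x z * π x z : ℂˣ) : ℂ) := by rw [Units.val_mul]
    _ = 1 := by rw [this, Units.val_one]
  -- character sum over X
  have sumX : ∀ z : G, (∑ x ∈ X, (π x z : ℂ)) =
      if ∀ x : G, x ^ 2 = 1 → π x z = 1 then (X.card : ℂ) else 0 := by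
    intro z
    split_ifs with h
    · have hone : ∀ x ∈ X, (π x z : ℂ) = 1 := fun x hx => by
        rw [h x ((memX x).mp hx), Units.val_one]
      rw [Finset.sum_congr rfl hone, Finset.sum_const, nsmul_eq_mul, mul_one]
    · push_neg at h
      rcases h with ⟨x₀, hx₀, hne⟩
      refine stmt6_shift X (fun x => π x z) x₀ ?_ ?_ hne
      · intro x hx
        rw [memX, mul_pow, hx₀, (memX x).mp hx, one_mul]
      · intro x
        exact hmul_left x₀ x z
  -- perp of X equals set of squares
  have perp_iff : ∀ z : G, (∀ x : G, x ^ 2 = 1 → π x z = 1) ↔ (∃ g : G, g ^ 2 = z) := by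
    have sq_perp : ∀ (g x : G), x ^ 2 = 1 → π x (g ^ 2) = 1 := by
      intro g x hx
      rw [pow_two g, hmul_right, ← hmul_left, ← pow_two x, hx, h1l]
    set T : Finset G := Finset.univ.filter (fun z => ∀ x : G, x ^ 2 = 1 → π x z = 1) with hT
    set Sq : Finset G := Finset.univ.filter (fun z => ∃ g : G, g ^ 2 = z) with hSq
    have hSqT : Sq ⊆ T := by
      intro z hz
      rcases (Finset.mem_filter.mp hz).2 with ⟨g, rfl⟩
      exact Finset.mem_filter.mpr ⟨Finset.mem_univ _, fun x hx => sq_perp g x hx⟩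
    -- counting: (T.card) * (X.card) = card G
    have hbig : (∑ z : G, ∑ x ∈ X, (π x z : ℂ)) = (Fintype.card G : ℂ) := by
      rw [Finset.sum_comm]
      have step : ∀ x ∈ X, (∑ z : G, (π x z : ℂ)) =
          if x = 1 then (Fintype.card G : ℂ) else 0 := by
        intro x _
        split_ifs with h
        · subst h
          have hone : ∀ z ∈ Finset.univ, ((π (1 : G) z : ℂ)) = 1 := fun z _ => by
            rw [h1l, Units.val_one]
          rw [Finset.sum_congr rfl hone, Finset.sum_const, nsmul_eq_mul, mul_one,
            Finset.card_univ]
        · have : ∃ h₀ : G, π x h₀ ≠ 1 := by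
            by_contra hc
            push_neg at hc
            exact h (hnondeg x hc)
          rcases this with ⟨h₀, hne⟩
          exact stmt6_shift Finset.univ (fun z => π x z) h₀
            (fun z _ => Finset.mem_univ _) (fun z => hmul_right x h₀ z) hne
      rw [Finset.sum_congr rfl step, Finset.sum_ite_eq' X (1 : G)]
      rw [if_pos ((memX 1).mpr (one_pow 2))]
    have hTcount : (T.card : ℂ) * (X.card : ℂ) = (Fintype.card G : ℂ) := by
      rw [← hbig, Finset.sum_congr rfl (fun z _ => sumX z)]
      rw [Finset.sum_ite, Finset.sum_const, Finset.sum_const, smul_zero, add_zero]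
      rw [hT, nsmul_eq_mul]
    have hXpos : (0 : ℕ) < X.card :=
      Finset.card_pos.mpr ⟨1, (memX 1).mpr (one_pow 2)⟩
    -- squares count
    have hSqcount : Sq.card * X.card = Fintype.card G := by
      set f : G →* G := powMonoidHom 2 with hf
      have hker : Nat.card f.ker = X.card := by
        rw [Nat.card_eq_fintype_card]
        rw [← Fintype.card_subtype]
        refine Fintype.card_congr (Equiv.subtypeEquivRight ?_)
        intro x
        rw [MonoidHom.mem_ker, hf, powMonoidHom_apply]
      have hrange : Nat.card f.range = Sq.card := by
        rw [Nat.card_eq_fintype_card]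
        rw [← Fintype.card_subtype]
        refine Fintype.card_congr (Equiv.subtypeEquivRight ?_)
        intro x
        rw [MonoidHom.mem_range]
        constructor
        · rintro ⟨g, rfl⟩; exact ⟨g, rfl⟩
        · rintro ⟨g, rfl⟩; exact ⟨g, rfl⟩
      have hcard := Subgroup.card_eq_card_quotient_mul_card_subgroup f.ker
      have hquot : Nat.card (G ⧸ f.ker) = Nat.card f.range :=
        Nat.card_congr (QuotientGroup.quotientKerEquivRange f).toEquiv
      rw [hquot, hrange, hker] at hcard
      rw [← hcard, Nat.card_eq_fintype_card]
    have hTSq : T = Sq := by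
      have hTn : T.card * X.card = Fintype.card G := by
        have : ((T.card * X.card : ℕ) : ℂ) = ((Fintype.card G : ℕ) : ℂ) := by
          push_cast
          exact hTcount
        exact_mod_cast this
      have : T.card = Sq.card := by
        have := hTn.trans hSqcount.symm
        exact Nat.eq_of_mul_eq_mul_right hXpos this
      exact (Finset.eq_of_subset_of_card_le hSqT (le_of_eq this)).symm
    intro z
    constructor
    · intro h
      have hz : z ∈ T := Finset.mem_filter.mpr ⟨Finset.mem_univ _, h⟩
      rw [hTSq] at hz
      exact (Finset.mem_filter.mp hz).2
    · rintro ⟨g, rfl⟩ x hx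
      exact sq_perp g x hx
  constructor
  · intro h1 y
    have key : (∑ x ∈ X, ((π x x : ℂ) * (π x y : ℂ))) = ∑ x ∈ X, (π x (c * y) : ℂ) := by
      refine Finset.sum_congr rfl fun x hx => ?_
      rw [h1 x ((memX x).mp hx), hmul_right, Units.val_mul]
    rw [key, sumX (c * y)]
    exact if_congr (perp_iff (c * y)) rfl rfl
  · intro h2 x hx
    have hy := h2 c⁻¹
    rw [if_pos ⟨1, by rw [one_pow, mul_inv_cancel]⟩] at hy
    -- each term is ±1
    have hterm : ∀ x ∈ X, ((π x x : ℂ) * (π x c⁻¹ : ℂ)) = 1 ∨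
        ((π x x : ℂ) * (π x c⁻¹ : ℂ)) = -1 := by
      intro x hxX
      have hx2 := (memX x).mp hxX
      refine mul_self_eq_one_iff.mp ?_
      rw [mul_mul_mul_comm, hsq x x hx2, hsq x c⁻¹ hx2, one_mul]
    -- all terms equal 1
    have hall : ∀ x ∈ X, ((π x x : ℂ) * (π x c⁻¹ : ℂ)) = 1 := by
      have hre : (∑ x ∈ X, (1 - ((π x x : ℂ) * (π x c⁻¹ : ℂ)).re)) = 0 := by
        rw [Finset.sum_sub_distrib, Finset.sum_const, nsmul_eq_mul, mul_one]
        have : (∑ x ∈ X, ((π x x : ℂ) * (π x c⁻¹ : ℂ)).re) = (X.card : ℝ) := by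
          have := congrArg Complex.re hy
          rw [Complex.re_sum] at this
          simpa using this
        rw [this, sub_self]
      have hnn : ∀ x ∈ X, 0 ≤ 1 - ((π x x : ℂ) * (π x c⁻¹ : ℂ)).re := by
        intro x hxX
        rcases hterm x hxX with h | h <;> rw [h] <;> norm_num
      have := (Finset.sum_eq_zero_iff_of_nonneg hnn).mp hre
      intro x hxX
      rcases hterm x hxX with h | h
      · exact h
      · exfalso
        have hzz := this x hxX
        rw [h] at hzz
        norm_num at hzz
    have hx1 := hall x ((memX x).mpr hx)
    have : (π x x : ℂ) = (π x c : ℂ) := by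
      have hc : (π x c⁻¹ : ℂ) = ((π x c)⁻¹ : ℂˣ) := by rw [hinv]
      rw [hc] at hx1
      field_simp at hx1
      rw [Units.val_inv_eq_inv_val, mul_inv_eq_one₀ (Units.ne_zero _)] at hx1
      exact hx1
    exact Units.ext this
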